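/- arXiv:2311.14555 — 2 statements merged into one kernel-verified Lean document; each statement's English description precedes it below -/
import Mathlib

section
/- Let c = −(4/15)e₃, and for R > 0 and t ≥ 0 define ρ_R(t,x) = R^{-3} ρ_{1,0}(x/R − tc/(|B(0,1)| R²)) where ρ_{1,0} = 1_{B(0,1)}/|B(0,1)|. Then for every t ≥ 0, W₁(ρ_R(t), ρ_1(t)) ≥ (4/15) · (t/|B(0,1)|) · |1/R − 1|. In particular, for any fixed R ≠ 1 this distance tends to infinity as t → ∞. -/
open MeasureTheory Real Filter

noncomputable abbrev E3 := EuclideanSpace ℝ (Fin 3)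

/-- 1-Wasserstein distance between densities, via Kantorovich–Rubinstein duality. -/
noncomputable def W1 (μ ν : E3 → ℝ) : ℝ :=
  ⨆ f : {f : E3 → ℝ // LipschitzWith 1 f}, |(∫ x, f.1 x * μ x) - ∫ x, f.1 x * ν x|

noncomputable def ω₁ : ℝ := (volume (Metric.ball (0:E3) 1)).toReal

noncomputable def cTS : E3 := (-(4/15 : ℝ)) • (EuclideanSpace.single (2 : Fin 3) (1:ℝ))

/-- traveling-wave solution of radius R at time t -/
noncomputable def ρR (R t : ℝ) : E3 → ℝ :=
  fun x => (R ^ 3)⁻¹ *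
    (Set.indicator (Metric.ball (0:E3) 1) 1 (R⁻¹ • x - (t / (ω₁ * R ^ 2)) • cTS) / ω₁)

lemma omega_pos : 0 < ω₁ := by
  rw [ω₁]
  exact ENNReal.toReal_pos (ne_of_gt (Metric.measure_ball_pos _ _ one_pos)) measure_ball_lt_top.ne

lemma abs_coord_le (x : E3) (i : Fin 3) : |x i| ≤ ‖x‖ := by
  rw [EuclideanSpace.norm_eq]
  rw [show |x i| = √(‖x i‖^2) by rw [Real.sqrt_sq_eq_abs]; simp]
  exact Real.sqrt_le_sqrt (Finset.single_le_sum (f := fun j => ‖x j‖ ^ 2)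
    (fun j _ => sq_nonneg _) (Finset.mem_univ i))

lemma vol_ball (b : E3) (R : ℝ) (hR : 0 < R) :
    (volume (Metric.ball b R)).toReal = R ^ 3 * ω₁ := by
  rw [Measure.addHaar_ball volume b hR.le, ENNReal.toReal_mul,
    ENNReal.toReal_ofReal (by positivity), ω₁]
  norm_num [finrank_euclideanSpace_fin]

lemma rhoR_eq (R t : ℝ) (hR : 0 < R) :
    ρR R t = fun x => (R ^ 3 * ω₁)⁻¹ *
      Set.indicator (Metric.ball (((t/(ω₁*R)) • cTS : E3)) R) 1 x := by
  funext x
  have hmem : (R⁻¹ • x - (t / (ω₁ * R ^ 2)) • cTS) ∈ Metric.ball (0:E3) 1 ↔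
      x ∈ Metric.ball (((t/(ω₁*R)) • cTS : E3)) R := by
    have key : R⁻¹ • x - (t / (ω₁ * R ^ 2)) • cTS
        = R⁻¹ • (x - ((t/(ω₁*R)) • cTS : E3)) := by
      rw [smul_sub, smul_smul]
      congr 2
      field_simp
    simp only [Metric.mem_ball, dist_zero_right, dist_eq_norm, key, sub_zero, norm_smul,
      norm_inv, Real.norm_eq_abs, abs_of_pos hR]
    rw [inv_mul_lt_iff₀ hR, mul_one]
  rw [ρR]
  by_cases hx : x ∈ Metric.ball (((t/(ω₁*R)) • cTS : E3)) R
  · rw [Set.indicator_of_mem (hmem.mpr hx), Set.indicator_of_mem hx]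
    simp only [Pi.one_apply]
    rw [mul_inv]
    ring
  · rw [Set.indicator_of_notMem (fun h => hx (hmem.mp h)), Set.indicator_of_notMem hx]
    simp

lemma integral_mul_indicator (f : E3 → ℝ) {s : Set E3} (hs : MeasurableSet s) :
    ∫ x, f x * s.indicator 1 x = ∫ x in s, f x := by
  rw [← integral_indicator hs]
  congr 1
  ext x
  by_cases hx : x ∈ s <;> simp [hx]

lemma integrableOn_cont {f : E3 → ℝ} (hf : Continuous f) (b : E3) (R : ℝ) :
    IntegrableOn f (Metric.ball b R) :=
  (hf.locallyIntegrable.integrableOn_isCompact (isCompact_closedBall b R)).mono_set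
    Metric.ball_subset_closedBall

lemma coord_ball_zero (R : ℝ) : ∫ x in Metric.ball (0:E3) R, x 2 = 0 := by
  have hmeas : MeasurableSet (Metric.ball (0:E3) R) := measurableSet_ball
  set G : E3 → ℝ := (Metric.ball (0:E3) R).indicator (fun x => x 2) with hG
  have h1 : ∫ x in Metric.ball (0:E3) R, x 2 = ∫ x, G x := (integral_indicator hmeas).symm
  have h2 : ∫ x, G x = ∫ x, G (-x) := (integral_neg_eq_self G volume).symm
  have h3 : ∀ x : E3, G (-x) = - G x := by
    intro x
    by_cases hx : x ∈ Metric.ball (0:E3) R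
    · have hx' : -x ∈ Metric.ball (0:E3) R := by
        simpa [Metric.mem_ball, dist_zero_right] using hx
      rw [hG, Set.indicator_of_mem hx', Set.indicator_of_mem hx]
      simp
    · have hx' : -x ∉ Metric.ball (0:E3) R := by
        simp only [Metric.mem_ball, dist_zero_right, norm_neg] at *
        exact hx
      rw [hG, Set.indicator_of_notMem hx', Set.indicator_of_notMem hx]
      simp
  have h4 : ∫ x, G x = - ∫ x, G x := by
    nth_rewrite 1 [h2]
    simp_rw [h3]
    exact integral_neg G
  linarith [h1 ▸ h4]

lemma coord_ball (b : E3) (R : ℝ) (hR : 0 < R) :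
    ∫ x in Metric.ball b R, x 2 = b 2 * (R ^ 3 * ω₁) := by
  have hmeas : MeasurableSet (Metric.ball b R) := measurableSet_ball
  set F : E3 → ℝ := (Metric.ball b R).indicator (fun x => x 2) with hF
  have h1 : ∫ x in Metric.ball b R, x 2 = ∫ x, F x := (integral_indicator hmeas).symm
  have h2 : ∫ x, F x = ∫ x, F (x + b) := (integral_add_right_eq_self F b).symm
  have h3 : ∀ x : E3, F (x + b) =
      (Metric.ball (0:E3) R).indicator (fun x => x 2 + b 2) x := by
    intro x
    have hmem : x + b ∈ Metric.ball b R ↔ x ∈ Metric.ball (0:E3) R := by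
      simp [Metric.mem_ball, dist_eq_norm]
    by_cases hx : x ∈ Metric.ball (0:E3) R
    · rw [hF, Set.indicator_of_mem (hmem.mpr hx), Set.indicator_of_mem hx]
      simp [PiLp.add_apply]
    · rw [hF, Set.indicator_of_notMem (fun h => hx (hmem.mp h)), Set.indicator_of_notMem hx]
  have h4 : ∫ x, (Metric.ball (0:E3) R).indicator (fun x => x 2 + b 2) x
      = ∫ x in Metric.ball (0:E3) R, (x 2 + b 2) := integral_indicator measurableSet_ball
  have hcont : Continuous (fun x : E3 => x 2) := (EuclideanSpace.proj (2 : Fin 3)).continuous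
  have h5 : ∫ x in Metric.ball (0:E3) R, (x 2 + b 2)
      = (∫ x in Metric.ball (0:E3) R, x 2) + ∫ x in Metric.ball (0:E3) R, (b 2 : ℝ) :=
    integral_add (integrableOn_cont hcont 0 R)
      (integrableOn_const measure_ball_lt_top.ne)
  rw [h1, h2]
  simp_rw [h3]
  rw [h4, h5, coord_ball_zero R, zero_add, setIntegral_const, smul_eq_mul, measureReal_def, vol_ball _ _ hR]
  ring

lemma cTS_coord : cTS 2 = -(4/15 : ℝ) := by
  rw [cTS]
  simp [PiLp.smul_apply, EuclideanSpace.single_apply]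

lemma cTS_norm : ‖cTS‖ = 4/15 := by
  rw [cTS, norm_smul, EuclideanSpace.norm_single]
  norm_num

lemma mass_rho (R t : ℝ) (hR : 0 < R) : ∫ x, ρR R t x = 1 := by
  rw [rhoR_eq R t hR, integral_const_mul]
  have : ∫ x, Set.indicator (Metric.ball (((t/(ω₁*R)) • cTS : E3)) R) (1 : E3 → ℝ) x
      = ∫ x in Metric.ball (((t/(ω₁*R)) • cTS : E3)) R, (1:ℝ) := integral_indicator measurableSet_ball
  rw [this, setIntegral_const, smul_eq_mul, mul_one, measureReal_def, vol_ball _ _ hR]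
  have h : (R ^ 3 * ω₁) ≠ 0 := mul_ne_zero (by positivity) omega_pos.ne'
  field_simp
  exact div_self omega_pos.ne'

lemma integral_coord_rho (R t : ℝ) (hR : 0 < R) :
    ∫ x, x 2 * ρR R t x = (t/(ω₁*R)) * (-(4/15)) := by
  rw [rhoR_eq R t hR]
  have h1 : ∀ x : E3, x 2 * ((R ^ 3 * ω₁)⁻¹ *
      Set.indicator (Metric.ball (((t/(ω₁*R)) • cTS : E3)) R) 1 x)
      = (R ^ 3 * ω₁)⁻¹ * (x 2 * Set.indicator (Metric.ball (((t/(ω₁*R)) • cTS : E3)) R) 1 x) := by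
    intro x; ring
  simp_rw [h1]
  rw [integral_const_mul, integral_mul_indicator _ measurableSet_ball, coord_ball _ R hR]
  have hb : ((t/(ω₁*R)) • cTS : E3) 2 = (t/(ω₁*R)) * (-(4/15)) := by
    rw [PiLp.smul_apply, cTS_coord, smul_eq_mul]
  rw [hb]
  have h : (R ^ 3 * ω₁) ≠ 0 := mul_ne_zero (by positivity) omega_pos.ne'
  rw [mul_comm ((R ^ 3 * ω₁)⁻¹), mul_assoc, mul_inv_cancel₀ h, mul_one]


lemma lip_proj : LipschitzWith 1 (fun x : E3 => x 2) := by
  apply LipschitzWith.of_dist_le_mul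
  intro x y
  rw [NNReal.coe_one, one_mul, Real.dist_eq, dist_eq_norm]
  have h := abs_coord_le (x - y) 2
  simpa [PiLp.sub_apply] using h

lemma integral_bound {f : E3 → ℝ} (hf : LipschitzWith 1 f) (R t : ℝ) (hR : 0 < R) :
    |(∫ x, f x * ρR R t x) - f 0| ≤ |t/(ω₁*R)| * (4/15) + R := by
  set b : E3 := (t/(ω₁*R)) • cTS with hb
  have hbn : ‖b‖ = |t/(ω₁*R)| * (4/15) := by
    rw [hb, norm_smul, cTS_norm, Real.norm_eq_abs]
  have hvol : (R ^ 3 * ω₁) ≠ 0 := mul_ne_zero (by positivity) omega_pos.ne'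
  have hcont : Continuous f := hf.continuous
  rw [rhoR_eq R t hR]
  have h1 : ∀ x : E3, f x * ((R ^ 3 * ω₁)⁻¹ * Set.indicator (Metric.ball b R) 1 x)
      = (R ^ 3 * ω₁)⁻¹ * (f x * Set.indicator (Metric.ball b R) 1 x) := fun x => by ring
  simp_rw [← hb, h1]
  rw [integral_const_mul, integral_mul_indicator _ measurableSet_ball]
  have hsub : ∫ x in Metric.ball b R, f x
      = (∫ x in Metric.ball b R, (f x - f 0)) + f 0 * (R ^ 3 * ω₁) := by
    rw [integral_sub (integrableOn_cont hcont b R)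
      (integrableOn_const measure_ball_lt_top.ne), setIntegral_const, smul_eq_mul,
      measureReal_def, vol_ball _ _ hR]
    ring
  rw [hsub]
  have heq : (R ^ 3 * ω₁)⁻¹ * ((∫ x in Metric.ball b R, (f x - f 0)) + f 0 * (R ^ 3 * ω₁)) - f 0
      = (R ^ 3 * ω₁)⁻¹ * (∫ x in Metric.ball b R, (f x - f 0)) := by
    field_simp [omega_pos.ne']
    ring
  rw [heq, abs_mul]
  have hbound : ‖∫ x in Metric.ball b R, (f x - f 0)‖ ≤ (‖b‖ + R) * (R ^ 3 * ω₁) := by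
    have := norm_setIntegral_le_of_norm_le_const (μ := volume)
      (s := Metric.ball b R) (f := fun x => f x - f 0) (C := ‖b‖ + R)
      measure_ball_lt_top ?_
    · rw [measureReal_def, vol_ball _ _ hR] at this
      exact this
    · intro x hx
      have h2 : ‖f x - f 0‖ ≤ ‖x‖ := by
        have := hf.dist_le_mul x 0
        simpa [Real.dist_eq, dist_eq_norm] using this
      refine h2.trans ?_
      have : ‖x - b‖ < R := by simpa [Metric.mem_ball, dist_eq_norm] using hx
      calc ‖x‖ = ‖b + (x - b)‖ := by congr 1; abel
        _ ≤ ‖b‖ + ‖x - b‖ := norm_add_le _ _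
        _ ≤ ‖b‖ + R := by linarith
  have hvolpos : 0 < R ^ 3 * ω₁ := by
    have := omega_pos; positivity
  calc |(R ^ 3 * ω₁)⁻¹| * |∫ x in Metric.ball b R, (f x - f 0)|
      ≤ (R ^ 3 * ω₁)⁻¹ * ((‖b‖ + R) * (R ^ 3 * ω₁)) := by
        rw [abs_of_pos (inv_pos.mpr hvolpos)]
        exact mul_le_mul_of_nonneg_left hbound (inv_nonneg.mpr hvolpos.le)
    _ = ‖b‖ + R := by field_simp [omega_pos.ne']
    _ = |t/(ω₁*R)| * (4/15) + R := by rw [hbn]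

/-- W₁(ρ_R(t), ρ_1(t)) ≥ (4/15)(t/|B(0,1)|)|1/R − 1|, diverging as t → ∞ for R ≠ 1. -/
theorem stmt4 :
    (∀ R : ℝ, 0 < R → ∀ t : ℝ, 0 ≤ t →
      (4/15) * (t / ω₁) * |1/R - 1| ≤ W1 (ρR R t) (ρR 1 t))
    ∧ ∀ R : ℝ, 0 < R → R ≠ 1 →
        Tendsto (fun t : ℝ => W1 (ρR R t) (ρR 1 t)) atTop atTop := by
  have main : ∀ R : ℝ, 0 < R → ∀ t : ℝ, 0 ≤ t →
      (4/15) * (t / ω₁) * |1/R - 1| ≤ W1 (ρR R t) (ρR 1 t) := by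
    intro R hR t ht
    set g : {f : E3 → ℝ // LipschitzWith 1 f} → ℝ :=
      fun f => |(∫ x, f.1 x * ρR R t x) - ∫ x, f.1 x * ρR 1 t x| with hg
    have hbdd : BddAbove (Set.range g) := by
      refine ⟨(|t/(ω₁*R)| * (4/15)+R) + (|t/(ω₁*1)| * (4/15)+1), ?_⟩
      rintro y ⟨f, rfl⟩
      have h1 := integral_bound f.2 R t hR
      have h2 := integral_bound f.2 1 t one_pos
      have heq : g f = |((∫ x, f.1 x * ρR R t x) - f.1 0)
          - ((∫ x, f.1 x * ρR 1 t x) - f.1 0)| := by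
        rw [hg]
        simp only
        congr 1
        ring
      rw [heq]
      calc |((∫ x, f.1 x * ρR R t x) - f.1 0) - ((∫ x, f.1 x * ρR 1 t x) - f.1 0)|
          ≤ |(∫ x, f.1 x * ρR R t x) - f.1 0| + |(∫ x, f.1 x * ρR 1 t x) - f.1 0| :=
            abs_sub _ _
        _ ≤ (|t/(ω₁*R)| * (4/15)+R) + (|t/(ω₁*1)| * (4/15)+1) := add_le_add h1 h2
    have hval : g ⟨fun x => x 2, lip_proj⟩ = (4/15) * (t / ω₁) * |1/R - 1| := by
      rw [hg]
      simp only
      rw [integral_coord_rho R t hR, integral_coord_rho 1 t one_pos]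
      have hω := omega_pos
      have key : t/(ω₁*R) * (-(4/15)) - t/(ω₁*1) * (-(4/15))
          = ((4/15) * (t / ω₁)) * (1 - 1/R) := by
        field_simp
        ring
      rw [key, abs_mul, abs_of_nonneg (by positivity : (0:ℝ) ≤ (4/15) * (t / ω₁)),
        abs_sub_comm]
    calc (4/15) * (t / ω₁) * |1/R - 1| = g ⟨fun x => x 2, lip_proj⟩ := hval.symm
      _ ≤ ⨆ f, g f := le_ciSup hbdd _
      _ = W1 (ρR R t) (ρR 1 t) := rfl
  refine ⟨main, ?_⟩
  intro R hR hne
  have hiff : (1:ℝ)/R ≠ 1 := by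
    intro h
    rw [div_eq_one_iff_eq hR.ne'] at h
    exact hne h.symm
  have habs : 0 < |1/R - 1| := abs_pos.mpr (sub_ne_zero.mpr hiff)
  have hω := omega_pos
  have hc : 0 < (4/15) * |1/R - 1| / ω₁ := by positivity
  apply tendsto_atTop_mono' atTop ?_ (Tendsto.const_mul_atTop hc tendsto_id)
  filter_upwards [eventually_ge_atTop (0:ℝ)] with t ht
  have h := main R hR t ht
  calc (4/15) * |1/R - 1| / ω₁ * id t = (4/15) * (t / ω₁) * |1/R - 1| := by
        simp only [id]; ring
    _ ≤ W1 (ρR R t) (ρR 1 t) := h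
end

section
/- Define K(θ) = −(1/(8π)) ∫₀^π ∫₀^{2π} √(γ(θ, θ̄, φ)) sin θ̄ cos θ̄ dφ dθ̄, where γ(θ, θ̄, φ) = 2 − 2 sin θ sin θ̄ cos φ − 2 cos θ cos θ̄. Then K(θ) = (2/15) cos θ for all θ ∈ [0, π]. -/
open MeasureTheory Real intervalIntegral

namespace Stmt12Aux

noncomputable def rho (x : ℝ × ℝ × ℝ) : ℝ := Real.sqrt (x.1^2 + x.2.1^2 + x.2.2^2)

def S : Set (ℝ × ℝ × ℝ) := {x | 1 < rho x ∧ rho x < 2}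

noncomputable def nf (θ : ℝ) (x : ℝ × ℝ × ℝ) : ℝ :=
  Real.sqrt ((rho x * sin θ - x.2.1)^2 + x.2.2^2 + (rho x * cos θ - x.1)^2)

noncomputable def f (θ : ℝ) : ℝ × ℝ × ℝ → ℝ :=
  S.indicator (fun x => nf θ x * x.1 / rho x ^ 2)

noncomputable def h : ℝ × ℝ × ℝ → ℝ :=
  S.indicator (fun x => nf 0 x * x.2.1 / rho x ^ 2)

noncomputable def G (θ t φ : ℝ) : ℝ :=
  Real.sqrt (2 - 2 * sin θ * sin t * cos φ - 2 * cos θ * cos t) * sin t * cos t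

lemma rho_nonneg (x : ℝ × ℝ × ℝ) : 0 ≤ rho x := Real.sqrt_nonneg _

lemma rho_sq (x : ℝ × ℝ × ℝ) : rho x ^ 2 = x.1^2 + x.2.1^2 + x.2.2^2 :=
  Real.sq_sqrt (by positivity)

lemma sq_le_rho_sq₁ (x : ℝ × ℝ × ℝ) : x.1^2 ≤ rho x ^ 2 := by rw [rho_sq]; nlinarith [sq_nonneg x.2.1, sq_nonneg x.2.2]
lemma sq_le_rho_sq₂ (x : ℝ × ℝ × ℝ) : x.2.1^2 ≤ rho x ^ 2 := by rw [rho_sq]; nlinarith [sq_nonneg x.1, sq_nonneg x.2.2]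

lemma abs_le_rho₁ (x : ℝ × ℝ × ℝ) : |x.1| ≤ rho x := by
  have := sq_le_rho_sq₁ x
  nlinarith [abs_nonneg x.1, rho_nonneg x, sq_abs x.1]

lemma abs_le_rho₂ (x : ℝ × ℝ × ℝ) : |x.2.1| ≤ rho x := by
  have := sq_le_rho_sq₂ x
  nlinarith [abs_nonneg x.2.1, rho_nonneg x, sq_abs x.2.1]

lemma nf_nonneg (θ : ℝ) (x : ℝ × ℝ × ℝ) : 0 ≤ nf θ x := Real.sqrt_nonneg _

lemma nf_le (θ : ℝ) (x : ℝ × ℝ × ℝ) : nf θ x ≤ 4 * rho x := by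
  have h1 : (rho x * sin θ - x.2.1)^2 + x.2.2^2 + (rho x * cos θ - x.1)^2 ≤ (4 * rho x)^2 := by
    have hs := sin_sq_add_cos_sq θ
    have h2 := rho_sq x
    have h3 := rho_nonneg x
    have h4 := neg_one_le_sin θ
    have h5 := sin_le_one θ
    have h6 := neg_one_le_cos θ
    have h7 := cos_le_one θ
    nlinarith [sq_nonneg (rho x * sin θ + x.2.1), sq_nonneg (rho x * cos θ + x.1), sq_nonneg (rho x)]
  calc nf θ x ≤ Real.sqrt ((4 * rho x)^2) := Real.sqrt_le_sqrt h1
  _ = 4 * rho x := Real.sqrt_sq (by nlinarith [rho_nonneg x])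

lemma f_abs_le (θ : ℝ) (x : ℝ × ℝ × ℝ) : |f θ x| ≤ S.indicator (fun _ => 8) x := by
  unfold f
  by_cases hx : x ∈ S
  · rw [Set.indicator_of_mem hx, Set.indicator_of_mem hx]
    obtain ⟨h1, h2⟩ := hx
    have hpos : (0:ℝ) < rho x ^ 2 := by nlinarith
    rw [abs_div, abs_mul, abs_of_nonneg (nf_nonneg θ x), abs_of_nonneg hpos.le,
      div_le_iff₀ hpos]
    nlinarith [nf_le θ x, abs_le_rho₁ x, nf_nonneg θ x, abs_nonneg x.1, rho_nonneg x]
  · rw [Set.indicator_of_notMem hx, Set.indicator_of_notMem hx]; simp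

lemma f_abs_le' (θ : ℝ) (x : ℝ × ℝ × ℝ) : |f θ x| ≤ 8 := by
  refine (f_abs_le θ x).trans ?_
  by_cases hx : x ∈ S <;> simp [Set.indicator_apply, hx]

lemma f_eq_zero (θ : ℝ) {x : ℝ × ℝ × ℝ} (hx : ¬ (1 < rho x ∧ rho x < 2)) : f θ x = 0 := by
  unfold f
  exact Set.indicator_of_notMem (s := S) hx _

lemma continuous_rho : Continuous rho := by
  unfold rho; fun_prop

lemma measurableSet_S : MeasurableSet S := by
  have : S = rho ⁻¹' (Set.Ioo 1 2) := rfl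
  rw [this]
  exact (measurableSet_Ioo).preimage continuous_rho.measurable

lemma continuous_nf (θ : ℝ) : Continuous (nf θ) := by
  unfold nf rho; fun_prop

lemma measurable_f (θ : ℝ) : Measurable (f θ) := by
  apply Measurable.indicator _ measurableSet_S
  exact ((continuous_nf θ).measurable.mul measurable_fst).div
    ((continuous_rho.measurable).pow_const 2)

lemma volume_S_lt_top : volume S < ⊤ := by
  have hsub : S ⊆ Set.Ioo (-2:ℝ) 2 ×ˢ (Set.Ioo (-2:ℝ) 2 ×ˢ Set.Ioo (-2:ℝ) 2) := by
    rintro x ⟨_, h2⟩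
    have e1 := (abs_le_rho₁ x).trans_lt h2
    have e2 := (abs_le_rho₂ x).trans_lt h2
    have e3 : |x.2.2| ≤ rho x := by
      have : x.2.2^2 ≤ rho x ^ 2 := by rw [rho_sq]; nlinarith [sq_nonneg x.1, sq_nonneg x.2.1]
      nlinarith [abs_nonneg x.2.2, rho_nonneg x, sq_abs x.2.2]
    have e3' := e3.trans_lt h2
    rw [abs_lt] at e1 e2 e3'
    exact ⟨⟨e1.1, e1.2⟩, ⟨e2.1, e2.2⟩, ⟨e3'.1, e3'.2⟩⟩
  calc volume S ≤ volume (Set.Ioo (-2:ℝ) 2 ×ˢ (Set.Ioo (-2:ℝ) 2 ×ˢ Set.Ioo (-2:ℝ) 2)) :=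
        measure_mono hsub
  _ < ⊤ := by
      rw [MeasureTheory.Measure.volume_eq_prod, MeasureTheory.Measure.prod_prod,
        MeasureTheory.Measure.volume_eq_prod, MeasureTheory.Measure.prod_prod]
      simp [Real.volume_Ioo]
      exact ENNReal.mul_lt_top ENNReal.ofReal_lt_top
        (ENNReal.mul_lt_top ENNReal.ofReal_lt_top ENNReal.ofReal_lt_top)


/-- Helper: bounded measurable function supported in a finite-measure set is integrable. -/
lemma integrable_of_indicator_bound {X : Type*} [MeasureSpace X] {g : X → ℝ} {s : Set X}
    (hg : AEStronglyMeasurable g volume) (hs : MeasurableSet s) (hμ : volume s < ⊤) {C : ℝ}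
    (hb : ∀ x, |g x| ≤ s.indicator (fun _ => C) x) : Integrable g volume := by
  refine Integrable.mono' ((integrable_indicator_iff hs).2 ?_) hg
    (Filter.Eventually.of_forall (by simpa [Real.norm_eq_abs] using hb))
  exact integrableOn_const hμ.ne

lemma integrable_f (θ : ℝ) : Integrable (f θ) volume := by
  refine integrable_of_indicator_bound (measurable_f θ).aestronglyMeasurable
    measurableSet_S volume_S_lt_top (f_abs_le θ)

/-- spherical radius formulas -/
lemma rho_sph_abs (r t φ : ℝ) :
    rho (r * cos t, (r * sin t * cos φ, r * sin t * sin φ)) = |r| := by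
  unfold rho
  rw [show (r * cos t)^2 + (r * sin t * cos φ)^2 + (r * sin t * sin φ)^2 = r^2 by
    linear_combination (r * sin t)^2 * (sin_sq_add_cos_sq φ) + r^2 * (sin_sq_add_cos_sq t)]
  exact Real.sqrt_sq_eq_abs r

lemma rho_sph (r t φ : ℝ) (hr : 0 ≤ r) :
    rho (r * cos t, (r * sin t * cos φ, r * sin t * sin φ)) = r := by
  rw [rho_sph_abs, abs_of_nonneg hr]

lemma rho_cyl (a ρ φ : ℝ) : rho (a, (ρ * cos φ, ρ * sin φ)) = Real.sqrt (a^2 + ρ^2) := by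
  unfold rho
  rw [show a^2 + (ρ * cos φ)^2 + (ρ * sin φ)^2 = a^2 + ρ^2 by
    linear_combination ρ^2 * (sin_sq_add_cos_sq φ)]

lemma nf_sph (θ r t φ : ℝ) (hr : 0 ≤ r) :
    nf θ (r * cos t, (r * sin t * cos φ, r * sin t * sin φ))
      = r * Real.sqrt (2 - 2 * sin θ * sin t * cos φ - 2 * cos θ * cos t) := by
  unfold nf
  rw [rho_sph r t φ hr]
  rw [show (r * sin θ - r * sin t * cos φ)^2 + (r * sin t * sin φ)^2 + (r * cos θ - r * cos t)^2
      = r^2 * (2 - 2 * sin θ * sin t * cos φ - 2 * cos θ * cos t) by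
    linear_combination r^2 * (sin_sq_add_cos_sq θ) + r^2 * (sin_sq_add_cos_sq t)
      + (r * sin t)^2 * (sin_sq_add_cos_sq φ)]
  rw [Real.sqrt_mul (sq_nonneg r), Real.sqrt_sq hr]

/-- First-stage polar integrand. -/
noncomputable def G1 (θ : ℝ) (z : ℝ × (ℝ × ℝ)) : ℝ :=
  Set.indicator (Set.Ioi (0:ℝ) ×ˢ Set.Ioo (-π) π)
    (fun q => q.1 * f θ (z.1, (q.1 * cos q.2, q.1 * sin q.2))) z.2

lemma G1_eq (θ : ℝ) : G1 θ = Set.indicator (Set.univ ×ˢ (Set.Ioi (0:ℝ) ×ˢ Set.Ioo (-π) π))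
    (fun z => z.2.1 * f θ (z.1, (z.2.1 * cos z.2.2, z.2.1 * sin z.2.2))) := by
  funext z
  by_cases hz : z.2 ∈ Set.Ioi (0:ℝ) ×ˢ Set.Ioo (-π) π
  · rw [G1, Set.indicator_of_mem hz, Set.indicator_of_mem (by simpa using hz)]
  · rw [G1, Set.indicator_of_notMem hz, Set.indicator_of_notMem (by simpa using hz)]

lemma measurable_G1 (θ : ℝ) : Measurable (G1 θ) := by
  rw [G1_eq]
  apply Measurable.indicator _ (MeasurableSet.univ.prod
    (measurableSet_Ioi.prod measurableSet_Ioo))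
  apply Measurable.mul (by fun_prop)
  apply (measurable_f θ).comp
  fun_prop

lemma G1_abs_le (θ : ℝ) (z : ℝ × (ℝ × ℝ)) : |G1 θ z| ≤ |z.2.1| * 8 := by
  unfold G1
  by_cases hz : z.2 ∈ Set.Ioi (0:ℝ) ×ˢ Set.Ioo (-π) π
  · rw [Set.indicator_of_mem hz, abs_mul]
    exact mul_le_mul_of_nonneg_left (f_abs_le' θ _) (abs_nonneg _)
  · rw [Set.indicator_of_notMem hz, abs_zero]; positivity

lemma G1_bound (θ : ℝ) (z : ℝ × (ℝ × ℝ)) :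
    |G1 θ z| ≤ (Set.Ioo (-2:ℝ) 2 ×ˢ (Set.Ioo (-2:ℝ) 2 ×ˢ Set.Ioo (-π) π)).indicator
      (fun _ => 16) z := by
  by_cases hz : z ∈ Set.Ioo (-2:ℝ) 2 ×ˢ (Set.Ioo (-2:ℝ) 2 ×ˢ Set.Ioo (-π) π)
  · rw [Set.indicator_of_mem hz]
    have h1 : |z.2.1| ≤ 2 := by
      have := hz.2.1; rw [Set.mem_Ioo] at this; rw [abs_le]; constructor <;> linarith [this.1, this.2]
    calc |G1 θ z| ≤ |z.2.1| * 8 := G1_abs_le θ z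
    _ ≤ 2 * 8 := by nlinarith
    _ = 16 := by norm_num
  · rw [Set.indicator_of_notMem hz]
    -- show G1 vanishes outside the box
    rw [Set.mem_prod, not_and_or] at hz
    rcases hz with hz1 | hz2
    · -- |z.1| ≥ 2, so rho of the argument is ≥ 2 and f = 0
      unfold G1
      by_cases hq : z.2 ∈ Set.Ioi (0:ℝ) ×ˢ Set.Ioo (-π) π
      · rw [Set.indicator_of_mem hq]
        have : f θ (z.1, (z.2.1 * cos z.2.2, z.2.1 * sin z.2.2)) = 0 := by
          apply f_eq_zero
          rw [rho_cyl]
          intro hcon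
          have h2 : Real.sqrt (z.1^2 + z.2.1^2) < 2 := hcon.2
          have h3 : |z.1| ≤ Real.sqrt (z.1^2 + z.2.1^2) := by
            rw [← Real.sqrt_sq_eq_abs]
            exact Real.sqrt_le_sqrt (by nlinarith [sq_nonneg z.2.1])
          rw [Set.mem_Ioo, not_and_or] at hz1
          rcases hz1 with hh | hh <;> push_neg at hh <;>
            [ (have : |z.1| ≥ 2 := by rw [abs_le'] at *; nlinarith [abs_nonneg z.1, neg_abs_le z.1]);
              (have : |z.1| ≥ 2 := le_abs.2 (Or.inl hh))] <;> linarith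
        rw [this, mul_zero, abs_zero]
      · rw [Set.indicator_of_notMem hq, abs_zero]
    · rw [Set.mem_prod, not_and_or] at hz2
      unfold G1
      rcases hz2 with hz21 | hz22
      · by_cases hq : z.2 ∈ Set.Ioi (0:ℝ) ×ˢ Set.Ioo (-π) π
        · rw [Set.indicator_of_mem hq]
          have : f θ (z.1, (z.2.1 * cos z.2.2, z.2.1 * sin z.2.2)) = 0 := by
            apply f_eq_zero
            rw [rho_cyl]
            intro hcon
            have h2 : Real.sqrt (z.1^2 + z.2.1^2) < 2 := hcon.2
            have h3 : |z.2.1| ≤ Real.sqrt (z.1^2 + z.2.1^2) := by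
              rw [← Real.sqrt_sq_eq_abs]
              exact Real.sqrt_le_sqrt (by nlinarith [sq_nonneg z.1])
            have h4 : 2 ≤ |z.2.1| := by
              rw [Set.mem_Ioo, not_and_or] at hz21
              rcases hz21 with hh | hh <;> push_neg at hh
              · exact (by rw [abs_le'] at *; nlinarith [neg_abs_le z.2.1] : 2 ≤ |z.2.1|)
              · exact le_abs.2 (Or.inl hh)
            linarith
          rw [this, mul_zero, abs_zero]
        · rw [Set.indicator_of_notMem hq, abs_zero]
      · rw [Set.indicator_of_notMem (fun hc => hz22 hc.2), abs_zero]

lemma integrable_G1 (θ : ℝ) : Integrable (G1 θ) volume := by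
  refine integrable_of_indicator_bound (measurable_G1 θ).aestronglyMeasurable
    (measurableSet_Ioo.prod (measurableSet_Ioo.prod measurableSet_Ioo)) ?_ (G1_bound θ)
  rw [MeasureTheory.Measure.volume_eq_prod, MeasureTheory.Measure.prod_prod,
    MeasureTheory.Measure.volume_eq_prod, MeasureTheory.Measure.prod_prod]
  simp [Real.volume_Ioo]
  exact ENNReal.mul_lt_top ENNReal.ofReal_lt_top
    (ENNReal.mul_lt_top ENNReal.ofReal_lt_top ENNReal.ofReal_lt_top)


noncomputable def Q (θ φ : ℝ) (p : ℝ × ℝ) : ℝ :=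
  Set.indicator (Set.Ioi (0:ℝ) ×ˢ Set.Ioo (-π) π)
    (fun p => p.1 * G1 θ (p.1 * cos p.2, (p.1 * sin p.2, φ))) p

lemma measurable_Q (θ φ : ℝ) : Measurable (Q θ φ) := by
  apply Measurable.indicator _ (measurableSet_Ioi.prod measurableSet_Ioo)
  exact measurable_fst.mul ((measurable_G1 θ).comp (by fun_prop))

lemma Q_bound (θ φ : ℝ) (p : ℝ × ℝ) :
    |Q θ φ p| ≤ (Set.Ioo (-2:ℝ) 2 ×ˢ Set.Ioo (-π) π).indicator (fun _ => 64) p := by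
  by_cases hp : p ∈ Set.Ioo (-2:ℝ) 2 ×ˢ Set.Ioo (-π) π
  · rw [Set.indicator_of_mem hp]
    have h1 : |p.1| ≤ 2 := by
      have := hp.1; rw [Set.mem_Ioo] at this; rw [abs_le]; exact ⟨this.1.le, this.2.le⟩
    have h2 : |Q θ φ p| ≤ |p.1| * (|p.1 * sin p.2| * 8) := by
      unfold Q
      by_cases hq : p ∈ Set.Ioi (0:ℝ) ×ˢ Set.Ioo (-π) π
      · rw [Set.indicator_of_mem hq, abs_mul]
        exact mul_le_mul_of_nonneg_left (G1_abs_le θ _) (abs_nonneg _)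
      · rw [Set.indicator_of_notMem hq, abs_zero]; positivity
    have h3 : |p.1 * sin p.2| ≤ 2 := by
      rw [abs_mul]
      calc |p.1| * |sin p.2| ≤ 2 * 1 := by
            apply mul_le_mul h1 (abs_le.2 ⟨neg_one_le_sin p.2, sin_le_one p.2⟩) (abs_nonneg _) (by norm_num)
      _ = 2 := by norm_num
    nlinarith [abs_nonneg p.1, abs_nonneg (p.1 * sin p.2)]
  · rw [Set.indicator_of_notMem hp]
    rw [Set.mem_prod, not_and_or] at hp
    unfold Q
    rcases hp with hp1 | hp2
    · by_cases hq : p ∈ Set.Ioi (0:ℝ) ×ˢ Set.Ioo (-π) π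
      · rw [Set.indicator_of_mem hq]
        have hr2 : (2:ℝ) ≤ p.1 := by
          have h0 : (0:ℝ) < p.1 := hq.1
          rw [Set.mem_Ioo, not_and_or] at hp1
          rcases hp1 with hh | hh <;> push_neg at hh <;> linarith
        have hG1z : G1 θ (p.1 * cos p.2, (p.1 * sin p.2, φ)) = 0 := by
          unfold G1
          by_cases hq2 : ((p.1 * sin p.2, φ) : ℝ × ℝ) ∈ Set.Ioi (0:ℝ) ×ˢ Set.Ioo (-π) π
          · rw [Set.indicator_of_mem hq2]
            have hf0 : f θ (p.1 * cos p.2, (p.1 * sin p.2 * cos φ, p.1 * sin p.2 * sin φ)) = 0 := by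
              apply f_eq_zero
              rw [rho_sph_abs]
              intro hcon
              have : |p.1| < 2 := hcon.2
              rw [abs_lt] at this
              linarith [this.2]
            rw [hf0, mul_zero]
          · rw [Set.indicator_of_notMem hq2]
        rw [hG1z, mul_zero, abs_zero]
      · rw [Set.indicator_of_notMem hq, abs_zero]
    · rw [Set.indicator_of_notMem (fun hc => hp2 hc.2), abs_zero]

lemma integrable_Q (θ φ : ℝ) : Integrable (Q θ φ) volume := by
  refine integrable_of_indicator_bound (measurable_Q θ φ).aestronglyMeasurable
    (measurableSet_Ioo.prod measurableSet_Ioo) ?_ (Q_bound θ φ)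
  rw [MeasureTheory.Measure.volume_eq_prod, MeasureTheory.Measure.prod_prod]
  simp [Real.volume_Ioo]
  exact ENNReal.mul_lt_top ENNReal.ofReal_lt_top ENNReal.ofReal_lt_top

lemma Ioo_subset_Ioo_pi : Set.Ioo (0:ℝ) π ⊆ Set.Ioo (-π) π := by
  intro x hx; exact ⟨by linarith [hx.1, pi_pos], hx.2⟩

lemma Qval (θ φ r t : ℝ) :
    Q θ φ (r, t) = Set.indicator (Set.Ioo (1:ℝ) 2) (fun r => r^2) r *
      Set.indicator (Set.Ioo (0:ℝ) π)
        (fun t => Set.indicator (Set.Ioo (-π) π) (fun φ => G θ t φ) φ) t := by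
  by_cases hp : ((r, t) : ℝ × ℝ) ∈ Set.Ioi (0:ℝ) ×ˢ Set.Ioo (-π) π
  · have hr : (0:ℝ) < r := hp.1
    have ht : t ∈ Set.Ioo (-π) π := hp.2
    rw [Q, Set.indicator_of_mem hp]
    simp only
    by_cases hst : 0 < sin t
    · have ht0 : t ∈ Set.Ioo (0:ℝ) π := by
        constructor
        · by_contra hc
          push_neg at hc
          have h1 : (0:ℝ) ≤ -t := by linarith
          have h2 : -t ≤ π := by linarith [ht.1]
          have := Real.sin_nonneg_of_nonneg_of_le_pi h1 h2
          rw [Real.sin_neg] at this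
          linarith
        · exact ht.2
      rw [Set.indicator_of_mem ht0]
      by_cases hφ : φ ∈ Set.Ioo (-π) π
      · rw [Set.indicator_of_mem hφ]
        have hq2 : ((r * sin t, φ) : ℝ × ℝ) ∈ Set.Ioi (0:ℝ) ×ˢ Set.Ioo (-π) π :=
          ⟨by exact mul_pos hr hst, hφ⟩
        rw [G1, Set.indicator_of_mem hq2]
        simp only
        unfold f
        by_cases hr12 : r ∈ Set.Ioo (1:ℝ) 2
        · have hmem : (r * cos t, (r * sin t * cos φ, r * sin t * sin φ)) ∈ S := by
            constructor <;> rw [rho_sph r t φ hr.le]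
            exacts [hr12.1, hr12.2]
          rw [Set.indicator_of_mem hmem, Set.indicator_of_mem hr12]
          simp only
          rw [nf_sph θ r t φ hr.le, rho_sph r t φ hr.le]
          unfold G
          field_simp
        · have hmem : (r * cos t, (r * sin t * cos φ, r * sin t * sin φ)) ∉ S := by
            rw [S, Set.mem_setOf_eq, rho_sph r t φ hr.le]
            exact hr12
          rw [Set.indicator_of_notMem hmem, Set.indicator_of_notMem hr12]
          simp
      · rw [Set.indicator_of_notMem hφ]
        have hq2 : ((r * sin t, φ) : ℝ × ℝ) ∉ Set.Ioi (0:ℝ) ×ˢ Set.Ioo (-π) π :=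
          fun hc => hφ hc.2
        rw [G1, Set.indicator_of_notMem hq2]
        simp
    · have hq2 : ((r * sin t, φ) : ℝ × ℝ) ∉ Set.Ioi (0:ℝ) ×ˢ Set.Ioo (-π) π := by
        intro hc
        have : (0:ℝ) < r * sin t := hc.1
        nlinarith [not_lt.1 hst]
      rw [G1, Set.indicator_of_notMem hq2, mul_zero]
      have ht0 : t ∉ Set.Ioo (0:ℝ) π := by
        intro hc
        exact hst (Real.sin_pos_of_pos_of_lt_pi hc.1 hc.2)
      rw [Set.indicator_of_notMem ht0, mul_zero]
  · rw [Q, Set.indicator_of_notMem hp]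
    rw [Set.mem_prod, not_and_or] at hp
    rcases hp with hp1 | hp2
    · have : r ∉ Set.Ioo (1:ℝ) 2 := by
        intro hc
        exact hp1 (by simp [Set.mem_Ioi]; linarith [hc.1])
      rw [Set.indicator_of_notMem this, zero_mul]
    · have : t ∉ Set.Ioo (0:ℝ) π := fun hc => hp2 (Ioo_subset_Ioo_pi hc)
      rw [Set.indicator_of_notMem this, mul_zero]


noncomputable def permE : (ℝ × (ℝ × ℝ)) ≃ᵐ (ℝ × (ℝ × ℝ)) :=
  (MeasurableEquiv.prodComm : (ℝ × (ℝ × ℝ)) ≃ᵐ ((ℝ × ℝ) × ℝ)).trans MeasurableEquiv.prodAssoc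

lemma permE_apply (y : ℝ × (ℝ × ℝ)) : permE y = (y.2.1, (y.2.2, y.1)) := rfl

lemma measurePreserving_permE : MeasurePreserving permE volume volume := by
  have hswap : MeasurePreserving (Prod.swap : ℝ × (ℝ × ℝ) → (ℝ × ℝ) × ℝ) volume volume := by
    rw [Measure.volume_eq_prod ℝ (ℝ × ℝ), Measure.volume_eq_prod (ℝ × ℝ) ℝ]
    exact Measure.measurePreserving_swap
  have hassoc : MeasurePreserving (MeasurableEquiv.prodAssoc : ((ℝ × ℝ) × ℝ) ≃ᵐ ℝ × (ℝ × ℝ))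
      volume volume := by
    rw [Measure.volume_eq_prod (ℝ × ℝ) ℝ, Measure.volume_eq_prod ℝ (ℝ × ℝ),
      Measure.volume_eq_prod ℝ ℝ]
    exact measurePreserving_prodAssoc _ _ _
  have hco : ⇑permE = ⇑(MeasurableEquiv.prodAssoc : ((ℝ × ℝ) × ℝ) ≃ᵐ ℝ × (ℝ × ℝ)) ∘
      (Prod.swap : ℝ × (ℝ × ℝ) → (ℝ × ℝ) × ℝ) := rfl
  rw [hco]
  exact hassoc.comp hswap

lemma int73 : ∫ r : ℝ, Set.indicator (Set.Ioo (1:ℝ) 2) (fun r => r^2) r = 7/3 := by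
  rw [MeasureTheory.integral_indicator measurableSet_Ioo, ← integral_Ioc_eq_integral_Ioo,
    ← intervalIntegral.integral_of_le (by norm_num : (1:ℝ) ≤ 2)]
  rw [integral_pow 2]
  norm_num

lemma L1 (θ : ℝ) : ∫ x : ℝ × ℝ × ℝ, f θ x
    = (7/3) * ∫ φ in Set.Ioo (-π) π, ∫ t in Set.Ioo (0:ℝ) π, G θ t φ := by
  have step1 : ∫ x : ℝ × ℝ × ℝ, f θ x = ∫ a : ℝ, ∫ p : ℝ × ℝ, f θ (a, p) := by
    rw [Measure.volume_eq_prod ℝ (ℝ × ℝ)]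
    exact integral_prod _ (by rw [← Measure.volume_eq_prod]; exact integrable_f θ)
  have step2 : ∀ a : ℝ, ∫ p : ℝ × ℝ, f θ (a, p) = ∫ q : ℝ × ℝ, G1 θ (a, q) := by
    intro a
    rw [← integral_comp_polarCoord_symm (fun p => f θ (a, p)),
      ← MeasureTheory.integral_indicator polarCoord.open_target.measurableSet]
    congr 1
  have step3 : ∫ a : ℝ, ∫ q : ℝ × ℝ, G1 θ (a, q) = ∫ z : ℝ × (ℝ × ℝ), G1 θ z := by
    rw [Measure.volume_eq_prod ℝ (ℝ × ℝ)]
    exact (integral_prod _ (by rw [← Measure.volume_eq_prod]; exact integrable_G1 θ)).symm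
  have step4 : ∫ z : ℝ × (ℝ × ℝ), G1 θ z = ∫ y : ℝ × (ℝ × ℝ), G1 θ (y.2.1, (y.2.2, y.1)) := by
    rw [← measurePreserving_permE.integral_comp permE.measurableEmbedding (G1 θ)]
    simp only [permE_apply]
  have hGperm : Integrable (fun y : ℝ × (ℝ × ℝ) => G1 θ (y.2.1, (y.2.2, y.1))) volume := by
    have := (measurePreserving_permE.integrable_comp_emb permE.measurableEmbedding).2
      (integrable_G1 θ)
    simpa [Function.comp_def, permE_apply] using this
  have step5 : ∫ y : ℝ × (ℝ × ℝ), G1 θ (y.2.1, (y.2.2, y.1))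
      = ∫ φ : ℝ, ∫ w : ℝ × ℝ, G1 θ (w.1, (w.2, φ)) := by
    rw [Measure.volume_eq_prod ℝ (ℝ × ℝ)]
    exact integral_prod _ (by rw [← Measure.volume_eq_prod]; exact hGperm)
  have step6 : ∀ φ : ℝ, ∫ w : ℝ × ℝ, G1 θ (w.1, (w.2, φ)) = ∫ p : ℝ × ℝ, Q θ φ p := by
    intro φ
    rw [← integral_comp_polarCoord_symm (fun w => G1 θ (w.1, (w.2, φ))),
      ← MeasureTheory.integral_indicator polarCoord.open_target.measurableSet]
    congr 1
  have step7 : ∀ φ : ℝ, ∫ p : ℝ × ℝ, Q θ φ p = ∫ t : ℝ, ∫ r : ℝ, Q θ φ (r, t) := by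
    intro φ
    rw [Measure.volume_eq_prod ℝ ℝ]
    exact integral_prod_symm _ (by rw [← Measure.volume_eq_prod]; exact integrable_Q θ φ)
  have step8 : ∀ φ t : ℝ, ∫ r : ℝ, Q θ φ (r, t)
      = (7/3) * Set.indicator (Set.Ioo (0:ℝ) π)
          (fun t => Set.indicator (Set.Ioo (-π) π) (fun φ => G θ t φ) φ) t := by
    intro φ t
    have : (fun r => Q θ φ (r, t)) = fun r => Set.indicator (Set.Ioo (1:ℝ) 2) (fun r => r^2) r
        * Set.indicator (Set.Ioo (0:ℝ) π)
          (fun t => Set.indicator (Set.Ioo (-π) π) (fun φ => G θ t φ) φ) t :=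
      funext fun r => Qval θ φ r t
    rw [this, MeasureTheory.integral_mul_const, int73]
  have step9 : ∀ φ : ℝ, ∫ t : ℝ, ∫ r : ℝ, Q θ φ (r, t)
      = Set.indicator (Set.Ioo (-π) π)
          (fun φ => (7/3) * ∫ t in Set.Ioo (0:ℝ) π, G θ t φ) φ := by
    intro φ
    simp_rw [step8 φ]
    rw [MeasureTheory.integral_const_mul, MeasureTheory.integral_indicator measurableSet_Ioo]
    by_cases hφ : φ ∈ Set.Ioo (-π) π
    · rw [Set.indicator_of_mem hφ]
      congr 1
      apply setIntegral_congr_fun measurableSet_Ioo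
      intro t _
      exact Set.indicator_of_mem hφ _
    · rw [Set.indicator_of_notMem hφ]
      have : ∀ t ∈ Set.Ioo (0:ℝ) π,
          Set.indicator (Set.Ioo (-π) π) (fun φ => G θ t φ) φ = 0 := by
        intro t _; rw [Set.indicator_of_notMem hφ]
      rw [setIntegral_congr_fun measurableSet_Ioo this]
      simp
  calc ∫ x : ℝ × ℝ × ℝ, f θ x
      = ∫ φ : ℝ, ∫ t : ℝ, ∫ r : ℝ, Q θ φ (r, t) := by
        rw [step1]
        simp_rw [step2]
        rw [step3, step4, step5]
        simp_rw [step6, step7]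
  _ = ∫ φ : ℝ, Set.indicator (Set.Ioo (-π) π)
        (fun φ => (7/3) * ∫ t in Set.Ioo (0:ℝ) π, G θ t φ) φ := by
        congr 1; funext φ; exact step9 φ
  _ = (7/3) * ∫ φ in Set.Ioo (-π) π, ∫ t in Set.Ioo (0:ℝ) π, G θ t φ := by
        rw [MeasureTheory.integral_indicator measurableSet_Ioo]
        exact MeasureTheory.integral_const_mul _ _


lemma measurable_h : Measurable h := by
  apply Measurable.indicator _ measurableSet_S
  exact ((continuous_nf 0).measurable.mul (by fun_prop)).div
    ((continuous_rho.measurable).pow_const 2)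

lemma h_abs_le (x : ℝ × ℝ × ℝ) : |h x| ≤ S.indicator (fun _ => 8) x := by
  unfold h
  by_cases hx : x ∈ S
  · rw [Set.indicator_of_mem hx, Set.indicator_of_mem hx]
    obtain ⟨h1, h2⟩ := hx
    have hpos : (0:ℝ) < rho x ^ 2 := by nlinarith
    rw [abs_div, abs_mul, abs_of_nonneg (nf_nonneg 0 x), abs_of_nonneg hpos.le,
      div_le_iff₀ hpos]
    nlinarith [nf_le 0 x, abs_le_rho₂ x, nf_nonneg 0 x, abs_nonneg x.2.1, rho_nonneg x]
  · rw [Set.indicator_of_notMem hx, Set.indicator_of_notMem hx]; simp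

lemma integrable_h : Integrable h volume :=
  integrable_of_indicator_bound measurable_h.aestronglyMeasurable
    measurableSet_S volume_S_lt_top h_abs_le

noncomputable def negE : (ℝ × ℝ × ℝ) ≃ᵐ (ℝ × ℝ × ℝ) :=
  (MeasurableEquiv.refl ℝ).prodCongr ((MeasurableEquiv.neg ℝ).prodCongr (MeasurableEquiv.refl ℝ))

lemma negE_apply (y : ℝ × ℝ × ℝ) : negE y = (y.1, (-y.2.1, y.2.2)) := rfl

lemma measurePreserving_negE : MeasurePreserving negE volume volume := by
  have h1 : MeasurePreserving (Neg.neg : ℝ → ℝ) volume volume :=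
    Measure.measurePreserving_neg volume
  have h2 : MeasurePreserving (Prod.map (Neg.neg : ℝ → ℝ) (id : ℝ → ℝ)) volume volume := by
    rw [Measure.volume_eq_prod ℝ ℝ]
    exact h1.prod (MeasurePreserving.id volume)
  have h3 : MeasurePreserving (Prod.map (id : ℝ → ℝ)
      (Prod.map (Neg.neg : ℝ → ℝ) (id : ℝ → ℝ))) volume volume := by
    rw [Measure.volume_eq_prod ℝ (ℝ × ℝ)]
    exact (MeasurePreserving.id volume).prod h2
  exact h3

lemma h_neg (y : ℝ × ℝ × ℝ) : h (y.1, (-y.2.1, y.2.2)) = - h y := by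
  have hrho : rho (y.1, (-y.2.1, y.2.2)) = rho y := by
    unfold rho; congr 1; ring
  have hnf : nf 0 (y.1, (-y.2.1, y.2.2)) = nf 0 y := by
    unfold nf; rw [hrho]; rw [Real.sin_zero]; congr 1; ring
  unfold h
  by_cases hy : y ∈ S
  · have hy' : ((y.1, (-y.2.1, y.2.2)) : ℝ × ℝ × ℝ) ∈ S := by
      simp only [S, Set.mem_setOf_eq, hrho]; exact hy
    rw [Set.indicator_of_mem hy', Set.indicator_of_mem hy]
    simp only
    rw [hnf, hrho]; ring
  · have hy' : ((y.1, (-y.2.1, y.2.2)) : ℝ × ℝ × ℝ) ∉ S := by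
      simp only [S, Set.mem_setOf_eq, hrho]; exact hy
    rw [Set.indicator_of_notMem hy', Set.indicator_of_notMem hy]; simp

lemma integral_h_zero : ∫ x : ℝ × ℝ × ℝ, h x = 0 := by
  have e1 : ∫ x : ℝ × ℝ × ℝ, h x = ∫ y : ℝ × ℝ × ℝ, h (negE y) :=
    (measurePreserving_negE.integral_comp negE.measurableEmbedding h).symm
  have e2 : ∀ y : ℝ × ℝ × ℝ, h (negE y) = - h y := fun y => by
    rw [negE_apply, h_neg]
  have e3 : ∫ y : ℝ × ℝ × ℝ, h (negE y) = - ∫ x : ℝ × ℝ × ℝ, h x := by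
    simp_rw [e2]
    exact integral_neg h
  linarith [e1, e3]

noncomputable def rotE (θ : ℝ) : (ℝ × ℝ) ≃ᵐ (ℝ × ℝ) :=
  Complex.measurableEquivRealProd.symm.trans
    (((rotation (Circle.exp θ)).toHomeomorph.toMeasurableEquiv).trans
      Complex.measurableEquivRealProd)

lemma rotE_apply (θ : ℝ) (p : ℝ × ℝ) :
    rotE θ p = (cos θ * p.1 - sin θ * p.2, sin θ * p.1 + cos θ * p.2) := by
  show Complex.measurableEquivRealProd
      ((rotation (Circle.exp θ)) (Complex.measurableEquivRealProd.symm p)) = _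
  have : ((rotation (Circle.exp θ)) (Complex.measurableEquivRealProd.symm p))
      = (Circle.exp θ : ℂ) * Complex.measurableEquivRealProd.symm p := rfl
  rw [this]
  simp [Complex.measurableEquivRealProd_apply, Complex.measurableEquivRealProd_symm_apply,
    Circle.coe_exp, Complex.exp_mul_I, Complex.mul_re, Complex.mul_im,
    Complex.add_re, Complex.add_im, Complex.cos_ofReal_re, Complex.sin_ofReal_re,
    Complex.cos_ofReal_im, Complex.sin_ofReal_im, Complex.mul_I_re, Complex.mul_I_im]
  ring

lemma measurePreserving_rotE (θ : ℝ) : MeasurePreserving (rotE θ) volume volume := by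
  have hco : ⇑(rotE θ) = ⇑Complex.measurableEquivRealProd ∘
      (⇑(rotation (Circle.exp θ)) ∘ ⇑Complex.measurableEquivRealProd.symm) := rfl
  rw [hco]
  exact Complex.volume_preserving_equiv_real_prod.comp
    ((rotation (Circle.exp θ)).measurePreserving.comp
      Complex.volume_preserving_equiv_real_prod.symm)

noncomputable def RE (θ : ℝ) : (ℝ × (ℝ × ℝ)) ≃ᵐ (ℝ × (ℝ × ℝ)) :=
  MeasurableEquiv.prodAssoc.symm.trans
    (((rotE θ).prodCongr (MeasurableEquiv.refl ℝ)).trans MeasurableEquiv.prodAssoc)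

lemma RE_apply (θ : ℝ) (y : ℝ × ℝ × ℝ) :
    RE θ y = (cos θ * y.1 - sin θ * y.2.1, (sin θ * y.1 + cos θ * y.2.1, y.2.2)) := by
  show (MeasurableEquiv.prodAssoc ((Prod.map (⇑(rotE θ)) (id : ℝ → ℝ))
    ((y.1, y.2.1), y.2.2)) : ℝ × ℝ × ℝ) = _
  simp [MeasurableEquiv.prodAssoc, Prod.map, rotE_apply]

lemma measurePreserving_RE (θ : ℝ) : MeasurePreserving (RE θ) volume volume := by
  have hassoc : MeasurePreserving (MeasurableEquiv.prodAssoc : ((ℝ × ℝ) × ℝ) ≃ᵐ ℝ × (ℝ × ℝ))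
      volume volume := by
    rw [Measure.volume_eq_prod (ℝ × ℝ) ℝ, Measure.volume_eq_prod ℝ (ℝ × ℝ),
      Measure.volume_eq_prod ℝ ℝ]
    exact measurePreserving_prodAssoc _ _ _
  have hassoc' : MeasurePreserving (⇑(MeasurableEquiv.prodAssoc :
      ((ℝ × ℝ) × ℝ) ≃ᵐ ℝ × (ℝ × ℝ)).symm) volume volume :=
    hassoc.symm _
  have hmid : MeasurePreserving (Prod.map (⇑(rotE θ)) (id : ℝ → ℝ)) volume volume := by
    rw [Measure.volume_eq_prod (ℝ × ℝ) ℝ]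
    exact (measurePreserving_rotE θ).prod (MeasurePreserving.id volume)
  have hco : ⇑(RE θ) = ⇑(MeasurableEquiv.prodAssoc : ((ℝ × ℝ) × ℝ) ≃ᵐ ℝ × (ℝ × ℝ)) ∘
      (Prod.map (⇑(rotE θ)) (id : ℝ → ℝ) ∘
        ⇑(MeasurableEquiv.prodAssoc : ((ℝ × ℝ) × ℝ) ≃ᵐ ℝ × (ℝ × ℝ)).symm) := rfl
  rw [hco]
  exact hassoc.comp (hmid.comp hassoc')

lemma frot (θ : ℝ) (y : ℝ × ℝ × ℝ) :
    f θ (cos θ * y.1 - sin θ * y.2.1, (sin θ * y.1 + cos θ * y.2.1, y.2.2))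
      = cos θ * f 0 y - sin θ * h y := by
  have hrho : rho (cos θ * y.1 - sin θ * y.2.1, (sin θ * y.1 + cos θ * y.2.1, y.2.2))
      = rho y := by
    unfold rho; congr 1
    linear_combination (y.1^2 + y.2.1^2) * (sin_sq_add_cos_sq θ)
  have hnf : nf θ (cos θ * y.1 - sin θ * y.2.1, (sin θ * y.1 + cos θ * y.2.1, y.2.2))
      = nf 0 y := by
    unfold nf; rw [hrho, Real.sin_zero, Real.cos_zero]; congr 1
    linear_combination (rho y^2 - 2 * rho y * y.1 + y.1^2 + y.2.1^2) * (sin_sq_add_cos_sq θ)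
  unfold f h
  by_cases hy : y ∈ S
  · have hy' : ((cos θ * y.1 - sin θ * y.2.1, (sin θ * y.1 + cos θ * y.2.1, y.2.2))
        : ℝ × ℝ × ℝ) ∈ S := by
      simp only [S, Set.mem_setOf_eq, hrho]; exact hy
    rw [Set.indicator_of_mem hy', Set.indicator_of_mem hy, Set.indicator_of_mem hy]
    simp only
    rw [hnf, hrho]
    ring
  · have hy' : ((cos θ * y.1 - sin θ * y.2.1, (sin θ * y.1 + cos θ * y.2.1, y.2.2))
        : ℝ × ℝ × ℝ) ∉ S := by
      simp only [S, Set.mem_setOf_eq, hrho]; exact hy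
    rw [Set.indicator_of_notMem hy', Set.indicator_of_notMem hy, Set.indicator_of_notMem hy]
    ring

lemma L2 (θ : ℝ) : ∫ x : ℝ × ℝ × ℝ, f θ x = cos θ * ∫ x : ℝ × ℝ × ℝ, f 0 x := by
  have e1 : ∫ x : ℝ × ℝ × ℝ, f θ x = ∫ y : ℝ × ℝ × ℝ, f θ (RE θ y) :=
    ((measurePreserving_RE θ).integral_comp (RE θ).measurableEmbedding (f θ)).symm
  have e2 : ∀ y : ℝ × ℝ × ℝ, f θ (RE θ y) = cos θ * f 0 y - sin θ * h y := fun y => by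
    rw [RE_apply, frot]
  rw [e1]
  simp_rw [e2]
  rw [integral_sub ((integrable_f 0).const_mul _) (integrable_h.const_mul _),
    MeasureTheory.integral_const_mul, MeasureTheory.integral_const_mul, integral_h_zero]
  ring

lemma trig_id (x : ℝ) :
    (1/2) * cos ((3/2)*x) - (1/2) * cos ((5/2)*x) = 2 * sin (x/2) * sin x * cos x := by
  have h32 : (3/2:ℝ)*x = x + x/2 := by ring
  have h52 : (5/2:ℝ)*x = 2*x + x/2 := by ring
  have hs : sin x = 2 * sin (x/2) * cos (x/2) := by
    rw [show x = 2*(x/2) by ring, Real.sin_two_mul]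
    ring_nf
  have hc : cos x = 2 * cos (x/2)^2 - 1 := by
    conv_lhs => rw [show x = 2*(x/2) by ring, Real.cos_two_mul]
  rw [h32, h52, Real.cos_add, Real.cos_add, Real.cos_two_mul, Real.sin_two_mul, hs, hc]
  linear_combination (cos (x/2) - 4*cos (x/2)^3) * (sin_sq_add_cos_sq (x/2))

lemma Jval : ∫ t in Set.Ioo (0:ℝ) π, Real.sqrt (2 - 2*cos t) * sin t * cos t = -(8/15) := by
  rw [← integral_Ioc_eq_integral_Ioo, ← intervalIntegral.integral_of_le pi_pos.le]
  have hcongr : Set.EqOn (fun t => Real.sqrt (2 - 2*cos t) * sin t * cos t)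
      (fun t => 2 * sin (t/2) * sin t * cos t) (Set.uIcc (0:ℝ) π) := by
    intro t ht
    rw [Set.uIcc_of_le pi_pos.le] at ht
    have hnn : 0 ≤ sin (t/2) :=
      Real.sin_nonneg_of_nonneg_of_le_pi (by linarith [ht.1]) (by linarith [ht.2, pi_pos])
    have h1 : 2 - 2*cos t = (2 * sin (t/2))^2 := by
      have h := Real.cos_two_mul (t/2)
      rw [show 2*(t/2) = t by ring] at h
      nlinarith [sin_sq_add_cos_sq (t/2)]
    have hsq : Real.sqrt (2 - 2*cos t) = 2 * sin (t/2) := by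
      rw [h1, Real.sqrt_sq (by linarith)]
    simp only [hsq]
  rw [intervalIntegral.integral_congr hcongr]
  have key : ∀ x ∈ Set.uIcc (0:ℝ) π,
      HasDerivAt (fun t => (1/3)*sin ((3/2)*t) - (1/5)*sin ((5/2)*t))
        (2 * sin (x/2) * sin x * cos x) x := by
    intro x _
    have d1 : HasDerivAt (fun t : ℝ => (3/2)*t) ((3/2) * 1) x := (hasDerivAt_id x).const_mul (3/2)
    have d2 : HasDerivAt (fun t : ℝ => (5/2)*t) ((5/2) * 1) x := (hasDerivAt_id x).const_mul (5/2)
    have e1 := (d1.sin).const_mul (1/3:ℝ)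
    have e2 := (d2.sin).const_mul (1/5:ℝ)
    have e3 := e1.sub e2
    refine HasDerivAt.congr_deriv e3 ?_
    rw [← trig_id x]
    ring
  rw [intervalIntegral.integral_eq_sub_of_hasDerivAt key
    (by apply Continuous.intervalIntegrable; fun_prop)]
  rw [show (3/2)*π = π + π/2 by ring, show (5/2)*π = π + (π + π/2) by ring]
  simp [Real.sin_add, Real.cos_add]
  norm_num

lemma G_zero (t φ : ℝ) : G 0 t φ = Real.sqrt (2 - 2*cos t) * sin t * cos t := by
  unfold G; norm_num

lemma L3 : ∫ x : ℝ × ℝ × ℝ, f 0 x = (7/3) * (2*π * (-(8/15))) := by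
  rw [L1 0]
  congr 1
  have hin : ∀ φ : ℝ, ∫ t in Set.Ioo (0:ℝ) π, G 0 t φ = -(8/15) := by
    intro φ
    simp_rw [G_zero]
    exact Jval
  simp_rw [hin]
  rw [setIntegral_const, Real.volume_real_Ioo_of_le (by linarith [pi_pos] : -π ≤ π), smul_eq_mul]
  ring

end Stmt12Aux


/-- K(θ) = −(1/8π) ∫₀^π ∫₀^{2π} √γ(θ,θ̄,φ) sin θ̄ cos θ̄ dφ dθ̄ = (2/15) cos θ. -/
theorem stmt12 (θ : ℝ) (hθ : θ ∈ Set.Icc 0 π) :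
    -(1 / (8 * π)) * ∫ θb in (0:ℝ)..π, (∫ φ in (0:ℝ)..(2 * π),
        Real.sqrt (2 - 2 * sin θ * sin θb * cos φ - 2 * cos θ * cos θb)
          * sin θb * cos θb)
      = (2 / 15) * cos θ := by

  have hI : ∫ φ in Set.Ioo (-π) π, ∫ t in Set.Ioo (0:ℝ) π, Stmt12Aux.G θ t φ
      = cos θ * (2*π * (-(8/15))) := by
    have h2 := Stmt12Aux.L2 θ
    rw [Stmt12Aux.L1 θ, Stmt12Aux.L3] at h2
    linarith
  have hstepa : ∀ t : ℝ, (∫ φ in (0:ℝ)..(2*π), Stmt12Aux.G θ t φ)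
      = ∫ φ in (-π)..π, Stmt12Aux.G θ t φ := by
    intro t
    have hper : Function.Periodic (fun φ => Stmt12Aux.G θ t φ) (2*π) := by
      intro x
      unfold Stmt12Aux.G
      simp only
      rw [Real.cos_add_two_pi]
    have hh := hper.intervalIntegral_add_eq 0 (-π)
    rw [zero_add] at hh
    rw [hh, show -π + 2*π = π by ring]
  have hcont : Continuous (Function.uncurry fun t φ => Stmt12Aux.G θ t φ) := by
    unfold Stmt12Aux.G Function.uncurry
    fun_prop
  have hint : Integrable (Function.uncurry fun t φ => Stmt12Aux.G θ t φ)
      ((volume.restrict (Set.Ioc (0:ℝ) π)).prod (volume.restrict (Set.Ioc (-π) π))) := by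
    rw [Measure.prod_restrict]
    refine IntegrableOn.mono_set ?_
      (Set.prod_mono Set.Ioc_subset_Icc_self Set.Ioc_subset_Icc_self)
    exact hcont.continuousOn.integrableOn_compact (isCompact_Icc.prod isCompact_Icc)
  have hswap := MeasureTheory.integral_integral_swap hint
  have hT : (∫ θb in (0:ℝ)..π, (∫ φ in (0:ℝ)..(2 * π),
      Real.sqrt (2 - 2 * sin θ * sin θb * cos φ - 2 * cos θ * cos θb)
        * sin θb * cos θb)) = cos θ * (2*π * (-(8/15))) := by
    have hid : (∫ θb in (0:ℝ)..π, (∫ φ in (0:ℝ)..(2 * π),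
        Real.sqrt (2 - 2 * sin θ * sin θb * cos φ - 2 * cos θ * cos θb)
          * sin θb * cos θb))
        = ∫ t in (0:ℝ)..π, (∫ φ in (0:ℝ)..(2*π), Stmt12Aux.G θ t φ) := rfl
    rw [hid]
    simp_rw [hstepa]
    rw [intervalIntegral.integral_of_le pi_pos.le]
    simp_rw [intervalIntegral.integral_of_le (by linarith [pi_pos] : (-π:ℝ) ≤ π)]
    rw [hswap]
    rw [integral_Ioc_eq_integral_Ioo]
    simp_rw [integral_Ioc_eq_integral_Ioo]
    exact hI
  rw [hT]
  have hpi := pi_ne_zero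
  field_simp
end
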